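/- For every positive integer k ≥ 2, the chromatic number of QI(k²,k) is at most C(k+1, 2): assigning to each uniform k-partition P a pair {a,b} ⊆ {1,…,k+1} of elements lying in a common class of P is a proper coloring. -/

import Mathlib

/-- Vertices of `QI(k²,k)`: uniform `k`-partitions of a `k²`-set (all classes of
size exactly `k`). -/
def UQIVertex (k : ℕ) : Type :=
  {P : Finpartition (Finset.univ : Finset (Fin (k ^ 2))) //
    ∀ A ∈ P.parts, A.card = k}

/-- The graph `QI(k²,k)`: uniform `k`-partitions of a `k²`-set, adjacent iff
qualitatively independent (every class of one meets every class of the other). -/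
def UQIGraph (k : ℕ) : SimpleGraph (UQIVertex k) :=
  SimpleGraph.fromRel fun P Q =>
    ∀ A ∈ P.1.parts, ∀ B ∈ Q.1.parts, (A ∩ B).Nonempty

section aux
variable {k : ℕ}

lemma uqi_le (hk : 2 ≤ k) : k + 1 ≤ k ^ 2 := by nlinarith

/-- embedding of Fin (k+1) into Fin (k^2) -/
noncomputable def uqiEmb (hk : 2 ≤ k) (i : Fin (k + 1)) : Fin (k ^ 2) :=
  Fin.castLE (uqi_le hk) i

lemma uqiEmb_inj (hk : 2 ≤ k) : Function.Injective (uqiEmb hk) := by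
  intro a b h
  simpa [uqiEmb, Fin.ext_iff] using h

/-- number of parts is k -/
lemma uqi_parts_card (hk : 2 ≤ k) (P : UQIVertex k) : P.1.parts.card = k := by
  have h := P.1.sum_card_parts
  rw [Finset.sum_congr rfl P.2] at h
  simp only [Finset.sum_const, smul_eq_mul, Finset.card_univ, Fintype.card_fin] at h
  have hk0 : 0 < k := by omega
  nlinarith [h]

/-- pigeonhole: two of the first k+1 elements share a part -/
lemma uqi_pigeon (hk : 2 ≤ k) (P : UQIVertex k) :
    ∃ a b : Fin (k + 1), a ≠ b ∧ ∃ A ∈ P.1.parts,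
      uqiEmb hk a ∈ A ∧ uqiEmb hk b ∈ A := by
  have hmaps : ∀ i : Fin (k + 1), i ∈ (Finset.univ : Finset (Fin (k+1))) →
      P.1.part (uqiEmb hk i) ∈ P.1.parts := fun i _ => P.1.part_mem.2 (by simp)
  have hcard : P.1.parts.card < (Finset.univ : Finset (Fin (k+1))).card := by
    rw [uqi_parts_card hk P]; simp
  obtain ⟨a, _, b, _, hab, h⟩ :=
    Finset.exists_ne_map_eq_of_card_lt_of_maps_to hcard hmaps
  exact ⟨a, b, hab, P.1.part (uqiEmb hk a), P.1.part_mem.2 (by simp),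
    P.1.mem_part (by simp), h ▸ P.1.mem_part (by simp)⟩

end aux

/-- For `k ≥ 2`, the chromatic number of `QI(k²,k)` is at most `C(k+1, 2)`. -/
theorem chromaticNumber_QIGraph_le (k : ℕ) (hk : 2 ≤ k) :
    (UQIGraph k).chromaticNumber ≤ ((k + 1).choose 2 : ℕ) := by
  classical
  set t : Finset (Finset (Fin (k+1))) := Finset.powersetCard 2 Finset.univ with ht
  -- coloring function
  have hcol : ∀ P : UQIVertex k, ∃ s : { x // x ∈ t },
      ∃ A ∈ P.1.parts, ∀ i ∈ s.1, uqiEmb hk i ∈ A := by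
    intro P
    obtain ⟨a, b, hab, A, hA, ha, hb⟩ := uqi_pigeon hk P
    refine ⟨⟨{a, b}, ?_⟩, A, hA, ?_⟩
    · simp [ht, Finset.mem_powersetCard, Finset.card_insert_of_notMem, hab]
    · intro i hi
      rcases Finset.mem_insert.1 hi with rfl | hi
      · exact ha
      · rw [Finset.mem_singleton.1 hi]; exact hb
  choose col A hA hmem using hcol
  have hvalid : ∀ {P Q : UQIVertex k}, (UQIGraph k).Adj P Q → col P ≠ col Q := by
    intro P Q hadj heq
    obtain ⟨hne, hrel⟩ := hadj
    -- QI in the direction from P to Q (symmetric)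
    have hQI : ∀ X ∈ P.1.parts, ∀ Y ∈ Q.1.parts, (X ∩ Y).Nonempty := by
      rcases hrel with h | h
      · exact h
      · intro X hX Y hY; rw [Finset.inter_comm]; exact h Y hY X hX
    -- pair {a,b} in both A P and A Q
    obtain ⟨a, b, hab, habs⟩ : ∃ a b : Fin (k+1), a ≠ b ∧ (col P).1 = {a, b} := by
      have hc2 : ((col P) : Finset (Fin (k+1))).card = 2 :=
        (Finset.mem_powersetCard.mp (col P).2).2
      obtain ⟨a, b, hab, h2⟩ := Finset.card_eq_two.1 hc2
      exact ⟨a, b, hab, h2⟩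
    have haP : uqiEmb hk a ∈ A P := hmem P a (by rw [habs]; simp)
    have hbP : uqiEmb hk b ∈ A P := hmem P b (by rw [habs]; simp)
    have haQ : uqiEmb hk a ∈ A Q := hmem Q a (by rw [← heq, habs]; simp)
    have hbQ : uqiEmb hk b ∈ A Q := hmem Q b (by rw [← heq, habs]; simp)
    -- A P has card k; its intersections with parts of Q partition it
    have hsum : ∑ B ∈ Q.1.parts, ((A P).filter (fun x => Q.1.part x = B)).card
        = (A P).card := by
      exact (Finset.card_eq_sum_card_fiberwise
        (fun x _ => Q.1.part_mem.2 (by simp))).symm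
    have hone : ∀ B ∈ Q.1.parts, 1 ≤ ((A P).filter (fun x => Q.1.part x = B)).card := by
      intro B hB
      obtain ⟨x, hx⟩ := hQI (A P) (hA P) B hB
      rw [Finset.mem_inter] at hx
      have : Q.1.part x = B := Q.1.part_eq_of_mem hB hx.2
      exact Finset.card_pos.2 ⟨x, Finset.mem_filter.2 ⟨hx.1, this⟩⟩
    have htwo : 2 ≤ ((A P).filter (fun x => Q.1.part x = A Q)).card := by
      have h1 : uqiEmb hk a ∈ (A P).filter (fun x => Q.1.part x = A Q) :=
        Finset.mem_filter.2 ⟨haP, Q.1.part_eq_of_mem (hA Q) haQ⟩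
      have h2 : uqiEmb hk b ∈ (A P).filter (fun x => Q.1.part x = A Q) :=
        Finset.mem_filter.2 ⟨hbP, Q.1.part_eq_of_mem (hA Q) hbQ⟩
      have hne' : uqiEmb hk a ≠ uqiEmb hk b := fun h => hab (uqiEmb_inj hk h)
      calc 2 = ({uqiEmb hk a, uqiEmb hk b} : Finset (Fin (k^2))).card := by
              rw [Finset.card_insert_of_notMem (by simpa using hne'), Finset.card_singleton]
        _ ≤ _ := Finset.card_le_card (by
              intro x hx
              rcases Finset.mem_insert.1 hx with rfl | hx
              · exact h1
              · rw [Finset.mem_singleton.1 hx]; exact h2)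
    -- sum ≥ k + 1 > k, contradiction
    have hge : k + 1 ≤ ∑ B ∈ Q.1.parts, ((A P).filter (fun x => Q.1.part x = B)).card := by
      have hAQ : A Q ∈ Q.1.parts := hA Q
      rw [← Finset.add_sum_erase _ _ hAQ]
      have h1 : (Q.1.parts.erase (A Q)).card
          ≤ ∑ B ∈ Q.1.parts.erase (A Q), ((A P).filter (fun x => Q.1.part x = B)).card := by
        calc (Q.1.parts.erase (A Q)).card
            = ∑ _B ∈ Q.1.parts.erase (A Q), 1 := by simp
          _ ≤ _ := Finset.sum_le_sum (fun B hB => hone B (Finset.mem_of_mem_erase hB))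
      have hec : (Q.1.parts.erase (A Q)).card = k - 1 := by
        rw [Finset.card_erase_of_mem hAQ, uqi_parts_card hk Q]
      omega
    rw [hsum, P.2 (A P) (hA P)] at hge
    omega
  -- build coloring
  have C : (UQIGraph k).Coloring { x // x ∈ t } := ⟨col, fun h => hvalid h⟩
  have := C.colorable.chromaticNumber_le
  have hcard : Fintype.card { x // x ∈ t } = (k + 1).choose 2 := by
    rw [Fintype.card_coe, ht, Finset.card_powersetCard]
    simp
  rwa [hcard] at this
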